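/- Let K be a compact subset of the open right half-plane {z ∈ ℂ : Re z > 0} and let ε > 0. Then for each choice of sign there exists a polynomial q with complex coefficients such that sup_{z ∈ K} |e^{±iz} − q(z²)| < ε. In other words, e^{±iz} can be uniformly approximated on K by polynomials in z containing only even powers of z. -/

import Mathlib

noncomputable section
set_option maxHeartbeats 1000000
open Complex Polynomial

lemma my_sqrt_sq (v : ℂ) : ((v ^ (2⁻¹ : ℂ)) ^ 2 = v) := by
  have := Complex.cpow_nat_inv_pow v (two_ne_zero)
  simpa using this

lemma my_sqrt_re_pos {v : ℂ} (hv : v ∈ Complex.slitPlane) : 0 < (v ^ (2⁻¹ : ℂ)).re := by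
  have hv0 : v ≠ 0 := Complex.slitPlane_ne_zero hv
  rw [Complex.cpow_def_of_ne_zero hv0, Complex.exp_re]
  have him : (Complex.log v * 2⁻¹).im = v.arg / 2 := by
    simp [Complex.mul_im, Complex.log_im, Complex.log_re]
    ring
  rw [him]
  have h1 : -Real.pi < v.arg := Complex.neg_pi_lt_arg v
  have h2 : v.arg < Real.pi := by
    rcases lt_or_eq_of_le (Complex.arg_le_pi v) with h | h
    · exact h
    · exact absurd ((Complex.arg_eq_pi_iff).mp h) (by
        rcases hv with h0 | h0
        · intro ⟨a, b⟩; linarith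
        · intro ⟨a, b⟩; exact h0 b)
  have hpi : 0 < Real.pi := Real.pi_pos
  exact mul_pos (Real.exp_pos _) (Real.cos_pos_of_mem_Ioo ⟨by linarith, by linarith⟩)

lemma norm_sq_re_im (x : ℂ) : ‖x‖ ^ 2 = x.re ^ 2 + x.im ^ 2 := by
  rw [Complex.sq_norm, Complex.normSq_apply]; ring

lemma slit_norm_add_re_pos {v : ℂ} (hv : v ∈ Complex.slitPlane) :
    0 < ‖v‖ + v.re := by
  rcases Complex.mem_slitPlane_iff.mp hv with h | h
  · have := norm_nonneg v; linarith
  · have h1 : |v.re| < ‖v‖ := by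
      exact Complex.abs_re_lt_norm.mpr h
    have h2 : -v.re ≤ |v.re| := neg_le_abs _
    linarith

lemma sqrt_posre_unique {s z : ℂ} (h : s ^ 2 = z ^ 2) (hs : 0 < s.re) (hz : 0 < z.re) :
    s = z := by
  have h0 : (s - z) * (s + z) = 0 := by linear_combination h
  rcases mul_eq_zero.mp h0 with h1 | h1
  · exact sub_eq_zero.mp h1
  · exfalso
    have : (s + z).re = 0 := by rw [h1]; simp
    simp only [Complex.add_re] at this
    linarith

lemma re_le_norm (x : ℂ) : x.re ≤ ‖x‖ := by
  exact Complex.re_le_norm x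

lemma sqrt_approx (K : Set ℂ) (hK : IsCompact K) (hne : K.Nonempty)
    (hKre : ∀ z ∈ K, 0 < z.re) (η : ℝ) (hη : 0 < η) :
    ∃ r : Polynomial ℂ, ∀ z ∈ K, ‖r.eval (z ^ 2) - z‖ < η := by
  classical
  -- bound on K
  obtain ⟨z₁, hz₁K, hz₁⟩ := hK.exists_isMaxOn hne continuous_norm.continuousOn
  obtain ⟨Cb, hCb⟩ : ∃ Cb : ℝ, Cb = ‖z₁‖ := ⟨_, rfl⟩
  have hC : ∀ z ∈ K, ‖z‖ ≤ Cb := fun z hz => hCb ▸ hz₁ hz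
  have hC0 : 0 ≤ Cb := hCb ▸ norm_nonneg _
  obtain ⟨B, hB⟩ : ∃ B : ℝ, B = 1 + Cb := ⟨_, rfl⟩
  have hB0 : 0 < B := by rw [hB]; linarith
  -- the compact set of squares along the homotopy
  set vfun : ℝ → ℂ → ℂ := fun t z => (1 - (t : ℂ)) + (t : ℂ) * z ^ 2 with hvfun
  set V : Set ℂ := (fun p : ℝ × ℂ => vfun p.1 p.2) '' (Set.Icc (0:ℝ) 1 ×ˢ K) with hV
  have hvV : ∀ t ∈ Set.Icc (0:ℝ) 1, ∀ z ∈ K, vfun t z ∈ V :=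
    fun t ht z hz => ⟨(t, z), ⟨ht, hz⟩, rfl⟩
  have hVcomp : IsCompact V := (isCompact_Icc.prod hK).image (by fun_prop)
  have hVslit : ∀ v ∈ V, v ∈ Complex.slitPlane := by
    rintro v ⟨⟨t, z⟩, ⟨⟨ht0, ht1⟩, hzK⟩, rfl⟩
    dsimp only at ht0 ht1 hzK
    have hx : 0 < z.re := hKre z hzK
    rw [Complex.mem_slitPlane_iff]
    have hsq_re : (z ^ 2).re = z.re * z.re - z.im * z.im := by
      rw [pow_two, Complex.mul_re]
    have hsq_im : (z ^ 2).im = z.re * z.im + z.im * z.re := by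
      rw [pow_two, Complex.mul_im]
    have hre : (vfun t z).re = (1 - t) + t * (z ^ 2).re := by
      simp [hvfun]
    have him : (vfun t z).im = t * (z ^ 2).im := by
      simp [hvfun]
    by_cases hy : z.im = 0
    · left
      rw [hre, hsq_re, hy]
      rcases eq_or_lt_of_le ht1 with h1 | h1
      · rw [← h1]; nlinarith
      · nlinarith
    · by_cases ht : t = 0
      · left; rw [hre, ht]; norm_num
      · right
        rw [him, hsq_im]
        have ht0' : 0 < t := lt_of_le_of_ne ht0 (Ne.symm ht)
        have hne' : z.re * z.im + z.im * z.re ≠ 0 := by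
          intro h
          apply hy
          have h2 : z.re * z.im = 0 := by linarith
          rcases mul_eq_zero.mp h2 with h' | h'
          · linarith
          · exact h'
        exact mul_ne_zero (ne_of_gt ht0') hne'
  have hVne : V.Nonempty := ⟨vfun 0 z₁, hvV 0 (by norm_num) z₁ hz₁K⟩
  -- the minimum of ‖v‖ + Re v on V
  obtain ⟨v₀, hv₀V, hv₀min⟩ := hVcomp.exists_isMinOn hVne
    ((continuous_norm.add Complex.continuous_re).continuousOn)
  obtain ⟨μ, hμdef⟩ : ∃ μ : ℝ, μ = ‖v₀‖ + v₀.re := ⟨_, rfl⟩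
  have hμ : ∀ v ∈ V, μ ≤ ‖v‖ + v.re := fun v hv => hμdef ▸ hv₀min hv
  have hμpos : 0 < μ := hμdef ▸ slit_norm_add_re_pos (hVslit v₀ hv₀V)
  obtain ⟨δ, hδdef⟩ : ∃ δ : ℝ, δ = Real.sqrt (μ / 2) := ⟨_, rfl⟩
  have hδ : 0 < δ := hδdef ▸ Real.sqrt_pos.mpr (by linarith)
  -- square root function
  set S : ℂ → ℂ := fun v => v ^ (2⁻¹ : ℂ) with hSdef
  have hSsq : ∀ v, S v ^ 2 = v := fun v => my_sqrt_sq v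
  have hSre2 : ∀ v : ℂ, ‖v‖ + v.re = 2 * (S v).re ^ 2 := by
    intro v
    have h1 : ‖v‖ = (S v).re ^ 2 + (S v).im ^ 2 := by
      calc ‖v‖ = ‖S v ^ 2‖ := by rw [hSsq]
        _ = ‖S v‖ ^ 2 := by rw [norm_pow]
        _ = (S v).re ^ 2 + (S v).im ^ 2 := norm_sq_re_im _
    have h2 : v.re = (S v).re ^ 2 - (S v).im ^ 2 := by
      conv_lhs => rw [← hSsq v]
      rw [pow_two, Complex.mul_re]; ring
    rw [h1, h2]; ring
  have hSre : ∀ v ∈ V, δ ≤ (S v).re := by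
    intro v hv
    have hpos : 0 < (S v).re := my_sqrt_re_pos (hVslit v hv)
    have h2 : μ / 2 ≤ (S v).re ^ 2 := by
      have := hμ v hv; have := hSre2 v; linarith
    calc δ = Real.sqrt (μ / 2) := hδdef
      _ ≤ Real.sqrt ((S v).re ^ 2) := Real.sqrt_le_sqrt h2
      _ = |(S v).re| := Real.sqrt_sq_eq_abs _
      _ = (S v).re := _root_.abs_of_pos hpos
  have habsV : ∀ v ∈ V, ‖v‖ ≤ B ^ 2 := by
    rintro v ⟨⟨t, z⟩, ⟨⟨ht0, ht1⟩, hzK⟩, rfl⟩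
    dsimp only at ht0 ht1 hzK
    have h1 : ‖vfun t z‖ ≤ ‖(1 : ℂ) - (t:ℂ)‖ + ‖(t:ℂ) * z ^ 2‖ := norm_add_le _ _
    have h2 : ‖(1 : ℂ) - (t:ℂ)‖ = 1 - t := by
      rw [show ((1:ℂ) - (t:ℂ)) = ((1 - t : ℝ) : ℂ) by push_cast; ring,
        Complex.norm_real, Real.norm_eq_abs, _root_.abs_of_nonneg (by linarith)]
    have h3 : ‖(t:ℂ) * z ^ 2‖ ≤ t * Cb ^ 2 := by
      rw [norm_mul, norm_pow, Complex.norm_real, Real.norm_eq_abs, _root_.abs_of_nonneg ht0]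
      have h4 := hC z hzK
      have h5 : ‖z‖ ^ 2 ≤ Cb ^ 2 := by nlinarith [norm_nonneg z]
      nlinarith
    have : ‖vfun t z‖ ≤ 1 + Cb ^ 2 := by
      simp only [hvfun] at h1 ⊢
      nlinarith [hC0]
    rw [hB]; nlinarith
  have hSabs : ∀ v ∈ V, ‖S v‖ ≤ B := by
    intro v hv
    have h1 : ‖S v‖ ^ 2 = ‖v‖ := by rw [← norm_pow, hSsq v]
    nlinarith [norm_nonneg (S v), habsV v hv]
  -- the damping constant
  obtain ⟨c, hcdef⟩ : ∃ c : ℝ, c = B ^ 2 / δ + δ := ⟨_, rfl⟩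
  have hc0 : 0 < c := by rw [hcdef]; positivity
  have hcδ : δ * c = B ^ 2 + δ ^ 2 := by
    rw [hcdef]; field_simp
  have hδc : δ ≤ c := by
    have : 0 ≤ B ^ 2 / δ := by positivity
    rw [hcdef]; linarith
  have hccne : ((c : ℂ)) ≠ 0 := Complex.ofReal_ne_zero.mpr (ne_of_gt hc0)
  obtain ⟨γ, hγdef⟩ : ∃ γ : ℂ, γ = (2 * (c:ℂ))⁻¹ := ⟨_, rfl⟩
  have hγabs : ‖γ‖ = (2 * c)⁻¹ := by
    rw [hγdef, norm_inv, show (2 * (c:ℂ)) = ((2 * c : ℝ) : ℂ) by push_cast; ring,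
      Complex.norm_real, Real.norm_eq_abs, _root_.abs_of_pos (by linarith)]
  -- contraction estimate
  have hcontr : ∀ s : ℂ, δ ≤ s.re → ‖s‖ ≤ B →
      ‖1 - s * (c:ℂ)⁻¹‖ ≤ 1 - δ / (2 * c) := by
    intro s hsre hsabs
    have hre_le : s.re ≤ B := le_trans (_root_.re_le_norm s) hsabs
    have hnsq : ‖s‖ ^ 2 = s.re ^ 2 + s.im ^ 2 := norm_sq_re_im s
    have key : ‖(c:ℂ) - s‖ ≤ c - δ / 2 := by
      have h1 : ‖(c:ℂ) - s‖ ^ 2 = (c - s.re) ^ 2 + s.im ^ 2 := by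
        rw [norm_sq_re_im]
        simp [Complex.sub_re, Complex.sub_im]
      have h2 : (c - s.re) ^ 2 + s.im ^ 2 ≤ (c - δ / 2) ^ 2 := by
        nlinarith [hnsq, hsabs, norm_nonneg s]
      nlinarith [norm_nonneg ((c:ℂ) - s), hδ, hδc]
    have hrw : 1 - s * (c:ℂ)⁻¹ = ((c:ℂ) - s) * (c:ℂ)⁻¹ := by
      field_simp
    rw [hrw, norm_mul, norm_inv, Complex.norm_real, Real.norm_eq_abs, _root_.abs_of_pos hc0]
    calc ‖(c:ℂ) - s‖ * c⁻¹ ≤ (c - δ / 2) * c⁻¹ :=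
          mul_le_mul_of_nonneg_right key (by positivity)
      _ = 1 - δ / (2 * c) := by field_simp
  -- Newton step
  obtain ⟨ρ, hρdef⟩ : ∃ ρ : ℝ, ρ = 1 - δ / (4 * c) := ⟨_, rfl⟩
  have hρ0 : 0 ≤ ρ := by
    have h1 : δ / (4 * c) ≤ 1 := by
      rw [div_le_one (by positivity)]; linarith
    rw [hρdef]; linarith
  have hρ1 : ρ < 1 := by
    have : 0 < δ / (4 * c) := by positivity
    rw [hρdef]; linarith
  have hstep : ∀ s v p : ℂ, s ^ 2 = v → δ ≤ s.re → ‖s‖ ≤ B →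
      ‖p - s‖ ≤ δ / 2 →
      ‖(p + (v - p ^ 2) * γ) - s‖ ≤ ρ * ‖p - s‖ := by
    intro s v p hsv hsre hsabs hps
    have hid : (p + (v - p ^ 2) * γ) - s = (p - s) * (1 - (s + p) * γ) := by
      rw [← hsv]; ring
    have hfac : 1 - (s + p) * γ = (1 - s * (c:ℂ)⁻¹) - (p - s) * γ := by
      have h2γ : ((c:ℂ))⁻¹ = 2 * γ := by
        rw [hγdef]; field_simp
      rw [h2γ]; ring
    have hfacbound : ‖1 - (s + p) * γ‖ ≤ ρ := by
      rw [hfac]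
      calc ‖(1 - s * (c:ℂ)⁻¹) - (p - s) * γ‖
          ≤ ‖1 - s * (c:ℂ)⁻¹‖ + ‖(p - s) * γ‖ := norm_sub_le _ _
        _ ≤ (1 - δ / (2 * c)) + (δ / 2) * (2 * c)⁻¹ := by
            have h1 := hcontr s hsre hsabs
            have h2 : ‖(p - s) * γ‖ ≤ (δ / 2) * (2 * c)⁻¹ := by
              rw [norm_mul, hγabs]
              exact mul_le_mul_of_nonneg_right hps (by positivity)
            linarith
        _ = ρ := by rw [hρdef]; field_simp; ring
    rw [hid, norm_mul]
    calc ‖p - s‖ * ‖1 - (s + p) * γ‖ ≤ ‖p - s‖ * ρ :=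
          mul_le_mul_of_nonneg_left hfacbound (norm_nonneg _)
      _ = ρ * ‖p - s‖ := mul_comm _ _
  -- iterated Newton steps
  have hiter : ∀ (A : Polynomial ℂ) (s : ℂ → ℂ),
      (∀ z ∈ K, s z ^ 2 = A.eval (z ^ 2) ∧ δ ≤ (s z).re ∧ ‖s z‖ ≤ B) →
      ∀ (p : Polynomial ℂ) (b : ℝ), 0 ≤ b → b ≤ δ / 2 →
      (∀ z ∈ K, ‖p.eval (z ^ 2) - s z‖ ≤ b) →
      ∀ j : ℕ, ∃ p' : Polynomial ℂ,
        ∀ z ∈ K, ‖p'.eval (z ^ 2) - s z‖ ≤ ρ ^ j * b := by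
    intro A s hs p b hb0 hb hp j
    induction j with
    | zero => exact ⟨p, by simpa using hp⟩
    | succ j ih =>
      obtain ⟨p', hp'⟩ := ih
      refine ⟨p' + (A - p' ^ 2) * Polynomial.C γ, ?_⟩
      intro z hz
      have h1 := hp' z hz
      have hρjb : ρ ^ j * b ≤ b := by
        have h2 : ρ ^ j ≤ 1 := pow_le_one₀ hρ0 (le_of_lt hρ1)
        nlinarith
      have hb' : ‖p'.eval (z ^ 2) - s z‖ ≤ δ / 2 := by linarith
      have hst := hstep (s z) (A.eval (z ^ 2)) (p'.eval (z ^ 2)) (hs z hz).1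
        (hs z hz).2.1 (hs z hz).2.2 hb'
      have heval : (p' + (A - p' ^ 2) * Polynomial.C γ).eval (z ^ 2)
          = p'.eval (z ^ 2) + (A.eval (z ^ 2) - p'.eval (z ^ 2) ^ 2) * γ := by
        simp
      rw [heval]
      calc ‖p'.eval (z ^ 2) + (A.eval (z ^ 2) - p'.eval (z ^ 2) ^ 2) * γ - s z‖
          ≤ ρ * ‖p'.eval (z ^ 2) - s z‖ := hst
        _ ≤ ρ * (ρ ^ j * b) := mul_le_mul_of_nonneg_left h1 hρ0
        _ = ρ ^ (j + 1) * b := by ring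
  -- drift estimate
  obtain ⟨Λ, hΛdef⟩ : ∃ Λ : ℝ, Λ = B ^ 2 / (2 * δ) := ⟨_, rfl⟩
  have hΛ0 : 0 ≤ Λ := by rw [hΛdef]; positivity
  have hdrift : ∀ t ∈ Set.Icc (0:ℝ) 1, ∀ t' ∈ Set.Icc (0:ℝ) 1, ∀ z ∈ K,
      ‖S (vfun t' z) - S (vfun t z)‖ ≤ |t' - t| * Λ := by
    intro t ht t' ht' z hz
    have hss' : (S (vfun t' z) - S (vfun t z)) * (S (vfun t' z) + S (vfun t z))
        = vfun t' z - vfun t z := by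
      have e1 : S (vfun t' z) ^ 2 = vfun t' z := hSsq _
      have e2 : S (vfun t z) ^ 2 = vfun t z := hSsq _
      linear_combination e1 - e2
    have hre2 : 2 * δ ≤ (S (vfun t' z) + S (vfun t z)).re := by
      have u1 := hSre _ (hvV t ht z hz)
      have u2 := hSre _ (hvV t' ht' z hz)
      simp only [Complex.add_re]
      linarith
    have habssum : 2 * δ ≤ ‖S (vfun t' z) + S (vfun t z)‖ :=
      le_trans hre2 (_root_.re_le_norm _)
    have hvdiff : ‖vfun t' z - vfun t z‖ ≤ |t' - t| * B ^ 2 := by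
      have hvv : vfun t' z - vfun t z = ((t' - t : ℝ) : ℂ) * (z ^ 2 - 1) := by
        simp only [hvfun]; push_cast; ring
      rw [hvv, norm_mul, Complex.norm_real, Real.norm_eq_abs]
      have h2 : ‖z ^ 2 - (1:ℂ)‖ ≤ B ^ 2 := by
        calc ‖z ^ 2 - (1:ℂ)‖ ≤ ‖z ^ 2‖ + ‖(1:ℂ)‖ := norm_sub_le _ _
          _ ≤ Cb ^ 2 + 1 := by
              rw [norm_pow, norm_one]
              have := hC z hz
              nlinarith [norm_nonneg z]
          _ ≤ B ^ 2 := by rw [hB]; nlinarith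
      exact mul_le_mul_of_nonneg_left h2 (abs_nonneg _)
    have habs_eq : ‖S (vfun t' z) - S (vfun t z)‖ * ‖S (vfun t' z) + S (vfun t z)‖
        = ‖vfun t' z - vfun t z‖ := by
      rw [← norm_mul, hss']
    have h3 : ‖S (vfun t' z) - S (vfun t z)‖ * (2 * δ) ≤ |t' - t| * B ^ 2 := by
      calc ‖S (vfun t' z) - S (vfun t z)‖ * (2 * δ)
          ≤ ‖S (vfun t' z) - S (vfun t z)‖ * ‖S (vfun t' z) + S (vfun t z)‖ :=
            mul_le_mul_of_nonneg_left habssum (norm_nonneg _)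
        _ = ‖vfun t' z - vfun t z‖ := habs_eq
        _ ≤ |t' - t| * B ^ 2 := hvdiff
    rw [hΛdef]
    rw [← sub_nonneg] at h3 ⊢
    have h2δ : 0 < 2 * δ := by linarith
    have expand : |t' - t| * (B ^ 2 / (2 * δ)) - ‖S (vfun t' z) - S (vfun t z)‖
        = (|t' - t| * B ^ 2 - ‖S (vfun t' z) - S (vfun t z)‖ * (2 * δ)) / (2 * δ) := by
      field_simp
    rw [expand]
    exact div_nonneg (by linarith) (by linarith)
  -- number of homotopy steps
  obtain ⟨Nn, hNn⟩ := exists_nat_gt (8 * Λ / δ)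
  have hNnR : 0 < (Nn : ℝ) := lt_of_le_of_lt (by positivity) hNn
  have hNnstep : (1 / (Nn : ℝ)) * Λ ≤ δ / 8 := by
    rw [div_lt_iff₀ hδ] at hNn
    rw [div_mul_eq_mul_div, one_mul, div_le_div_iff₀ hNnR (by norm_num : (0:ℝ) < 8)]
    nlinarith
  obtain ⟨k, hk⟩ := exists_pow_lt_of_lt_one (show (0:ℝ) < 1/2 by norm_num) hρ1
  -- target properties along the homotopy
  have htarget : ∀ t ∈ Set.Icc (0:ℝ) 1, ∀ z ∈ K,
      (fun z => S (vfun t z)) z ^ 2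
          = (Polynomial.C (1 - (t:ℂ)) + Polynomial.C (t:ℂ) * Polynomial.X).eval (z ^ 2)
        ∧ δ ≤ ((fun z => S (vfun t z)) z).re ∧ ‖(fun z => S (vfun t z)) z‖ ≤ B := by
    intro t ht z hz
    refine ⟨?_, hSre _ (hvV t ht z hz), hSabs _ (hvV t ht z hz)⟩
    rw [hSsq]
    simp [hvfun]
  -- main induction along the homotopy
  have main : ∀ i : ℕ, i ≤ Nn → ∃ p : Polynomial ℂ,
      ∀ z ∈ K, ‖p.eval (z ^ 2) - S (vfun ((i : ℝ) / (Nn : ℝ)) z)‖ ≤ δ / 4 := by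
    intro i
    induction i with
    | zero =>
      intro _
      refine ⟨1, ?_⟩
      intro z hz
      have h0 : vfun (((0:ℕ) : ℝ) / (Nn : ℝ)) z = 1 := by
        simp [hvfun]
      rw [h0]
      have hS1 : S (1 : ℂ) = 1 := Complex.one_cpow _
      rw [hS1]
      simp only [Polynomial.eval_one, sub_self, norm_zero]
      positivity
    | succ i ih =>
      intro hi
      obtain ⟨p, hp⟩ := ih (Nat.le_of_succ_le hi)
      have hti : (i : ℝ) / Nn ∈ Set.Icc (0:ℝ) 1 := by
        constructor
        · positivity
        · rw [div_le_one hNnR]; exact_mod_cast Nat.le_of_succ_le hi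
      have hti' : ((i + 1 : ℕ) : ℝ) / Nn ∈ Set.Icc (0:ℝ) 1 := by
        constructor
        · positivity
        · rw [div_le_one hNnR]; exact_mod_cast hi
      have hdiffval : ((i + 1 : ℕ) : ℝ) / Nn - (i : ℝ) / Nn = 1 / Nn := by
        push_cast; ring
      have hstart : ∀ z ∈ K, ‖p.eval (z ^ 2) - S (vfun (((i + 1 : ℕ) : ℝ) / Nn) z)‖
          ≤ 3 * δ / 8 := by
        intro z hz
        have h1 := hp z hz
        have h2 := hdrift ((i : ℝ) / Nn) hti (((i + 1 : ℕ) : ℝ) / Nn) hti' z hz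
        rw [hdiffval] at h2
        have h2' : ‖S (vfun (((i + 1 : ℕ) : ℝ) / Nn) z) - S (vfun ((i : ℝ) / Nn) z)‖
            ≤ δ / 8 := by
          calc ‖S (vfun (((i + 1 : ℕ) : ℝ) / Nn) z) - S (vfun ((i : ℝ) / Nn) z)‖
              ≤ |1 / (Nn : ℝ)| * Λ := h2
            _ = (1 / (Nn : ℝ)) * Λ := by rw [_root_.abs_of_pos (by positivity)]
            _ ≤ δ / 8 := hNnstep
        calc ‖p.eval (z ^ 2) - S (vfun (((i + 1 : ℕ) : ℝ) / Nn) z)‖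
            = dist (p.eval (z ^ 2)) (S (vfun (((i + 1 : ℕ) : ℝ) / Nn) z)) :=
              (dist_eq_norm _ _).symm
          _ ≤ dist (p.eval (z ^ 2)) (S (vfun ((i : ℝ) / Nn) z))
              + dist (S (vfun ((i : ℝ) / Nn) z)) (S (vfun (((i + 1 : ℕ) : ℝ) / Nn) z)) :=
              dist_triangle _ _ _
          _ = ‖p.eval (z ^ 2) - S (vfun ((i : ℝ) / Nn) z)‖
              + ‖S (vfun (((i + 1 : ℕ) : ℝ) / Nn) z) - S (vfun ((i : ℝ) / Nn) z)‖ := by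
              rw [dist_eq_norm, dist_eq_norm,
                norm_sub_rev (S (vfun ((i : ℝ) / Nn) z)) (S (vfun (((i + 1 : ℕ) : ℝ) / Nn) z))]
          _ ≤ δ / 4 + δ / 8 := add_le_add h1 h2'
          _ = 3 * δ / 8 := by ring
      obtain ⟨p', hp'⟩ := hiter
        (Polynomial.C (1 - ((((i + 1 : ℕ) : ℝ) / Nn : ℝ) : ℂ)) + Polynomial.C ((((i + 1 : ℕ) : ℝ) / Nn : ℝ) : ℂ) * Polynomial.X)
        (fun z => S (vfun (((i + 1 : ℕ) : ℝ) / Nn) z))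
        (htarget _ hti') p (3 * δ / 8) (by positivity) (by linarith) hstart k
      refine ⟨p', ?_⟩
      intro z hz
      have h3 := hp' z hz
      have h4 : ρ ^ k * (3 * δ / 8) ≤ δ / 4 := by nlinarith [pow_nonneg hρ0 k]
      linarith
  -- conclusion
  obtain ⟨p, hp⟩ := main Nn le_rfl
  have hNN : ((Nn : ℕ) : ℝ) / (Nn : ℝ) = 1 := div_self (ne_of_gt hNnR)
  rw [hNN] at hp
  have hS1z : ∀ z ∈ K, S (vfun 1 z) = z := by
    intro z hz
    apply sqrt_posre_unique
    · rw [hSsq]; simp [hvfun]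
    · calc (0:ℝ) < δ := hδ
        _ ≤ (S (vfun 1 z)).re := hSre _ (hvV 1 (by norm_num) z hz)
    · exact hKre z hz
  have hp' : ∀ z ∈ K, ‖p.eval (z ^ 2) - z‖ ≤ δ / 4 := by
    intro z hz
    have := hp z hz
    rwa [hS1z z hz] at this
  have hfinal_target : ∀ z ∈ K, (fun z : ℂ => z) z ^ 2
      = (Polynomial.X : Polynomial ℂ).eval (z ^ 2) ∧ δ ≤ ((fun z : ℂ => z) z).re
      ∧ ‖(fun z : ℂ => z) z‖ ≤ B := by
    intro z hz
    refine ⟨by simp, ?_, ?_⟩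
    · have h5 := hSre _ (hvV 1 (by norm_num) z hz)
      rwa [hS1z z hz] at h5
    · rw [hB]
      have := hC z hz
      linarith
  obtain ⟨m, hm⟩ := exists_pow_lt_of_lt_one
    (show (0:ℝ) < η / (δ / 4) by positivity) hρ1
  obtain ⟨r, hr⟩ := hiter Polynomial.X (fun z : ℂ => z) hfinal_target p (δ / 4)
    (by positivity) (by linarith) hp' m
  refine ⟨r, ?_⟩
  intro z hz
  calc ‖r.eval (z ^ 2) - z‖ ≤ ρ ^ m * (δ / 4) := hr z hz
    _ < (η / (δ / 4)) * (δ / 4) := mul_lt_mul_of_pos_right hm (by positivity)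
    _ = η := by field_simp

lemma exp_poly_approx (R ε : ℝ) (hε : 0 < ε) :
    ∃ P : Polynomial ℂ, ∀ w : ℂ, ‖w‖ ≤ R → ‖Complex.exp w - P.eval w‖ < ε := by
  set R' : ℝ := max R 0 with hR'
  have hsumR : Summable (fun i => R' ^ i / (i.factorial : ℝ)) := Real.summable_pow_div_factorial R'
  have htail : Filter.Tendsto (fun N => ∑' i, R' ^ (i + N) / ((i + N).factorial : ℝ))
      Filter.atTop (nhds 0) := by
    have := tendsto_sum_nat_add (fun i => R' ^ i / (i.factorial : ℝ))
    exact this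
  obtain ⟨N, hN⟩ := (htail.eventually (eventually_lt_nhds hε)).exists
  refine ⟨∑ i ∈ Finset.range N, Polynomial.C ((i.factorial : ℂ))⁻¹ * Polynomial.X ^ i, ?_⟩
  intro w hw
  have hsum : Summable (fun i => w ^ i / (i.factorial : ℂ)) := NormedSpace.expSeries_div_summable w
  have hexp : Complex.exp w = ∑' i, w ^ i / (i.factorial : ℂ) := by
    rw [Complex.exp_eq_exp_ℂ, NormedSpace.exp_eq_tsum_div]
  have heval : (∑ i ∈ Finset.range N, Polynomial.C ((i.factorial : ℂ))⁻¹ * Polynomial.X ^ i).eval w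
      = ∑ i ∈ Finset.range N, w ^ i / (i.factorial : ℂ) := by
    simp [Polynomial.eval_finset_sum, div_eq_inv_mul]
  rw [hexp, heval, ← hsum.sum_add_tsum_nat_add N]
  have : ∀ i, ‖w ^ (i + N) / ((i + N).factorial : ℂ)‖ ≤ R' ^ (i + N) / ((i + N).factorial : ℝ) := by
    intro i
    rw [norm_div, norm_pow]
    have h1 : ‖((i + N).factorial : ℂ)‖ = ((i + N).factorial : ℝ) := by
      simp
    rw [h1]
    gcongr <;> first | positivity | exact le_max_of_le_left hw
  calc ‖∑ i ∈ Finset.range N, w ^ i / (i.factorial : ℂ) + (∑' i, w ^ (i + N) / ((i + N).factorial : ℂ))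
        - ∑ i ∈ Finset.range N, w ^ i / (i.factorial : ℂ)‖
      = ‖∑' i, w ^ (i + N) / ((i + N).factorial : ℂ)‖ := by rw [add_sub_cancel_left]
    _ ≤ ∑' i, ‖w ^ (i + N) / ((i + N).factorial : ℂ)‖ := norm_tsum_le_tsum_norm (by
        exact ((hsum.norm).comp_injective (add_left_injective N)))
    _ ≤ ∑' i, R' ^ (i + N) / ((i + N).factorial : ℝ) := by
        refine Summable.tsum_le_tsum this ((hsum.norm).comp_injective (add_left_injective N)) ?_
        exact (hsumR.comp_injective (add_left_injective N))
    _ < ε := hN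


/-- On a compact subset K of the open right half-plane, e^{±iz} can be
uniformly approximated by polynomials in z² (i.e. by polynomials in z
containing only even powers of z). -/
theorem exp_approx_by_even_polynomials
    (K : Set ℂ) (hK : IsCompact K) (hKre : ∀ z ∈ K, 0 < z.re)
    (ε : ℝ) (hε : 0 < ε) (σ : ℝ) (hσ : σ = 1 ∨ σ = -1) :
    ∃ q : Polynomial ℂ,
      (⨆ z : K, ‖Complex.exp ((σ : ℂ) * Complex.I * (z : ℂ))
        - q.eval ((z : ℂ) ^ 2)‖) < ε := by
  have hσabs : ‖(σ:ℂ) * Complex.I‖ = 1 := by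
    rcases hσ with h | h <;> subst h <;> push_cast <;> simp
  rcases K.eq_empty_or_nonempty with hKe | hne
  · refine ⟨0, ?_⟩
    have hsup : (⨆ z : K, ‖Complex.exp ((σ : ℂ) * Complex.I * (z : ℂ))
        - (0 : Polynomial ℂ).eval ((z : ℂ) ^ 2)‖) ≤ ε / 2 := by
      apply Real.iSup_le ?_ (by positivity)
      rintro ⟨z, hz⟩
      rw [hKe] at hz
      exact absurd hz (Set.notMem_empty z)
    linarith
  · obtain ⟨z₁, hz₁K, hz₁⟩ := hK.exists_isMaxOn hne continuous_norm.continuousOn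
    obtain ⟨Cb, hCb⟩ : ∃ Cb : ℝ, Cb = ‖z₁‖ := ⟨_, rfl⟩
    have hC : ∀ z ∈ K, ‖z‖ ≤ Cb := fun z hz => hCb ▸ hz₁ hz
    have hC0 : 0 ≤ Cb := hCb ▸ norm_nonneg _
    have hE : 0 < Real.exp (Cb + 1) := Real.exp_pos _
    obtain ⟨η, hηdef⟩ : ∃ η : ℝ, η = min 1 (ε / (8 * Real.exp (Cb + 1))) := ⟨_, rfl⟩
    have hη0 : 0 < η := by rw [hηdef]; positivity
    have hη1 : η ≤ 1 := hηdef ▸ min_le_left _ _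
    have hη2 : η ≤ ε / (8 * Real.exp (Cb + 1)) := hηdef ▸ min_le_right _ _
    obtain ⟨r, hr⟩ := sqrt_approx K hK hne hKre η hη0
    obtain ⟨P, hP⟩ := exp_poly_approx (Cb + 1) (ε / 4) (by positivity)
    refine ⟨P.comp (Polynomial.C ((σ:ℂ) * Complex.I) * r), ?_⟩
    have key : ∀ z ∈ K, ‖Complex.exp ((σ:ℂ) * Complex.I * z)
        - (P.comp (Polynomial.C ((σ:ℂ) * Complex.I) * r)).eval (z ^ 2)‖ ≤ ε / 2 := by
      intro z hz
      set w : ℂ := r.eval (z ^ 2) with hwdef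
      have hwz : ‖w - z‖ < η := hr z hz
      have hwnorm : ‖w‖ ≤ Cb + 1 := by
        calc ‖w‖ = ‖z + (w - z)‖ := by rw [show z + (w - z) = w from by ring]
          _ ≤ ‖z‖ + ‖w - z‖ := norm_add_le _ _
          _ ≤ Cb + 1 := add_le_add (hC z hz) (le_of_lt (lt_of_lt_of_le hwz hη1))
      have heval : (P.comp (Polynomial.C ((σ:ℂ) * Complex.I) * r)).eval (z ^ 2)
          = P.eval ((σ:ℂ) * Complex.I * w) := by
        simp [Polynomial.eval_comp, hwdef]
      rw [heval]
      have hterm2 : ‖Complex.exp ((σ:ℂ) * Complex.I * w)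
          - P.eval ((σ:ℂ) * Complex.I * w)‖ < ε / 4 := by
        apply hP
        rw [norm_mul, hσabs, one_mul]
        exact hwnorm
      have hterm1 : ‖Complex.exp ((σ:ℂ) * Complex.I * z)
          - Complex.exp ((σ:ℂ) * Complex.I * w)‖ ≤ ε / 4 := by
        have hfact : Complex.exp ((σ:ℂ) * Complex.I * z)
            - Complex.exp ((σ:ℂ) * Complex.I * w)
            = Complex.exp ((σ:ℂ) * Complex.I * w)
              * (Complex.exp ((σ:ℂ) * Complex.I * (z - w)) - 1) := by
          rw [show (σ:ℂ) * Complex.I * z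
              = (σ:ℂ) * Complex.I * w + (σ:ℂ) * Complex.I * (z - w) from by ring,
            Complex.exp_add]
          ring
        rw [hfact, norm_mul]
        have h1 : ‖Complex.exp ((σ:ℂ) * Complex.I * w)‖ ≤ Real.exp (Cb + 1) := by
          rw [Complex.norm_exp]
          apply Real.exp_le_exp.mpr
          calc ((σ:ℂ) * Complex.I * w).re ≤ ‖(σ:ℂ) * Complex.I * w‖ := _root_.re_le_norm _
            _ = ‖w‖ := by rw [norm_mul, hσabs, one_mul]
            _ ≤ Cb + 1 := hwnorm
        have habs : ‖(σ:ℂ) * Complex.I * (z - w)‖ = ‖w - z‖ := by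
          rw [norm_mul, hσabs, one_mul, norm_sub_rev]
        have h2 : ‖Complex.exp ((σ:ℂ) * Complex.I * (z - w)) - 1‖ ≤ 2 * η := by
          have hle1 : ‖(σ:ℂ) * Complex.I * (z - w)‖ ≤ 1 := by
            rw [habs]; linarith
          have hb := Complex.norm_exp_sub_one_le hle1
          calc ‖Complex.exp ((σ:ℂ) * Complex.I * (z - w)) - 1‖
              ≤ 2 * ‖(σ:ℂ) * Complex.I * (z - w)‖ := hb
            _ = 2 * ‖w - z‖ := by rw [habs]
            _ ≤ 2 * η := by linarith
        have h8 : η * (8 * Real.exp (Cb + 1)) ≤ ε := by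
          rw [← le_div_iff₀ (by positivity)]
          exact hη2
        calc ‖Complex.exp ((σ:ℂ) * Complex.I * w)‖
              * ‖Complex.exp ((σ:ℂ) * Complex.I * (z - w)) - 1‖
            ≤ Real.exp (Cb + 1) * (2 * η) :=
              mul_le_mul h1 h2 (norm_nonneg _) (le_of_lt hE)
          _ ≤ ε / 4 := by nlinarith
      calc ‖Complex.exp ((σ:ℂ) * Complex.I * z) - P.eval ((σ:ℂ) * Complex.I * w)‖
          = ‖(Complex.exp ((σ:ℂ) * Complex.I * z) - Complex.exp ((σ:ℂ) * Complex.I * w))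
            + (Complex.exp ((σ:ℂ) * Complex.I * w) - P.eval ((σ:ℂ) * Complex.I * w))‖ := by
            rw [show (Complex.exp ((σ:ℂ) * Complex.I * z)
                - Complex.exp ((σ:ℂ) * Complex.I * w))
              + (Complex.exp ((σ:ℂ) * Complex.I * w) - P.eval ((σ:ℂ) * Complex.I * w))
              = Complex.exp ((σ:ℂ) * Complex.I * z) - P.eval ((σ:ℂ) * Complex.I * w)
              from by ring]
        _ ≤ ‖Complex.exp ((σ:ℂ) * Complex.I * z) - Complex.exp ((σ:ℂ) * Complex.I * w)‖
            + ‖Complex.exp ((σ:ℂ) * Complex.I * w) - P.eval ((σ:ℂ) * Complex.I * w)‖ :=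
            norm_add_le _ _
        _ ≤ ε / 4 + ε / 4 := add_le_add hterm1 (le_of_lt hterm2)
        _ = ε / 2 := by ring
    have hsup : (⨆ z : K, ‖Complex.exp ((σ : ℂ) * Complex.I * (z : ℂ))
        - (P.comp (Polynomial.C ((σ:ℂ) * Complex.I) * r)).eval ((z : ℂ) ^ 2)‖) ≤ ε / 2 :=
      Real.iSup_le (fun z => key z z.2) (by positivity)
    linarith
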